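/- Let G be a finite simple connected graph such that κ_LLY(u,v) ≥ κ > 0 for every edge uv of G. Then for every vertex x and every vertex y with d(x,y) = i ≥ 1, one has |Γ_x^+(y)| + (1/2)·|Γ_x^0(y)| ≤ (1 − iκ/2)·deg(y), where Γ_x^+(y) = {u ∈ N(y) : d(x,u) = d(x,y)+1} and Γ_x^0(y) = {u ∈ N(y) : d(x,u) = d(x,y)}. -/

import Mathlib

open Finset

noncomputable section

/-- The (normalized) graph Laplacian `Δf(x) = (1/deg x) ∑_{y ~ x} (f y - f x)`. -/
def graphLap {V : Type*} [Fintype V] (G : SimpleGraph V) [DecidableRel G.Adj]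
    (f : V → ℝ) (x : V) : ℝ :=
  (G.degree x : ℝ)⁻¹ * ∑ y ∈ G.neighborFinset x, (f y - f x)

/-- `f` is 1-Lipschitz with respect to the graph distance. -/
def IsLip1 {V : Type*} (G : SimpleGraph V) (f : V → ℝ) : Prop :=
  ∀ u v : V, |f u - f v| ≤ G.dist u v

/-- Lin–Lu–Yau curvature of a pair of vertices, via the limit-free
(Münch–Wojciechowski) formulation. -/
def kappaLLY {V : Type*} [Fintype V] (G : SimpleGraph V) [DecidableRel G.Adj]
    (x y : V) : ℝ :=
  sInf { r : ℝ | ∃ f : V → ℝ, IsLip1 G f ∧ f y - f x = G.dist x y ∧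
      r = (graphLap G f x - graphLap G f y) / G.dist x y }

/-- `G` contains a cycle of length `n` as a subgraph: `n` distinct vertices
arranged cyclically so that consecutive ones are adjacent. -/
def HasCycleLen {V : Type*} (G : SimpleGraph V) (n : ℕ) [NeZero n] : Prop :=
  ∃ c : Fin n → V, Function.Injective c ∧ ∀ i : Fin n, G.Adj (c i) (c (i + 1))

lemma lap_abs_le {V : Type*} [Fintype V] (G : SimpleGraph V) [DecidableRel G.Adj]
    {f : V → ℝ} (hf : IsLip1 G f) (v : V) : |graphLap G f v| ≤ 1 := by
  unfold graphLap
  rcases Nat.eq_zero_or_pos (G.degree v) with h | h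
  · simp [h]
  · rw [abs_mul, abs_inv, Nat.abs_cast]
    rw [inv_mul_le_iff₀ (by exact_mod_cast h), mul_one]
    calc |∑ y ∈ G.neighborFinset v, (f y - f v)| ≤ ∑ y ∈ G.neighborFinset v, |f y - f v| :=
          Finset.abs_sum_le_sum_abs _ _
      _ ≤ ∑ y ∈ G.neighborFinset v, 1 := by
          apply Finset.sum_le_sum
          intro u hu
          have hadj : G.Adj v u := by rwa [SimpleGraph.mem_neighborFinset] at hu
          have := hf u v
          have hd : G.dist u v = 1 := SimpleGraph.dist_eq_one_iff_adj.mpr hadj.symm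
          rw [hd] at this
          exact_mod_cast this
      _ = G.degree v := by simp [SimpleGraph.card_neighborFinset_eq_degree]

lemma bddBelow_kappa_set {V : Type*} [Fintype V] (G : SimpleGraph V) [DecidableRel G.Adj]
    (a b : V) : BddBelow { r : ℝ | ∃ f : V → ℝ, IsLip1 G f ∧ f b - f a = G.dist a b ∧
      r = (graphLap G f a - graphLap G f b) / G.dist a b } := by
  refine ⟨-2, ?_⟩
  rintro r ⟨g, hg, -, rfl⟩
  have h1 := lap_abs_le G hg a
  have h2 := lap_abs_le G hg b
  rcases Nat.eq_zero_or_pos (G.dist a b) with h | h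
  · rw [h]; norm_num
  · have hd : (1:ℝ) ≤ (G.dist a b : ℝ) := by exact_mod_cast h
    rw [le_div_iff₀ (by linarith)]
    rw [abs_le] at h1 h2
    nlinarith

lemma edge_step {V : Type*} [Fintype V] (G : SimpleGraph V) [DecidableRel G.Adj]
    {a b : V} (hab : G.Adj a b) {f : V → ℝ} (hf : IsLip1 G f) (h1 : f b - f a = 1)
    {κ : ℝ} (hκ : κ ≤ kappaLLY G a b) :
    κ ≤ graphLap G f a - graphLap G f b := by
  have hd : G.dist a b = 1 := SimpleGraph.dist_eq_one_iff_adj.mpr hab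
  have hmem : (graphLap G f a - graphLap G f b) / (G.dist a b : ℝ) ∈
      { r : ℝ | ∃ f : V → ℝ, IsLip1 G f ∧ f b - f a = G.dist a b ∧
        r = (graphLap G f a - graphLap G f b) / G.dist a b } :=
    ⟨f, hf, by rw [hd]; exact_mod_cast h1, rfl⟩
  have h2 := csInf_le (bddBelow_kappa_set G a b) hmem
  change kappaLLY G a b ≤ _ at h2
  rw [hd, Nat.cast_one, div_one] at h2
  exact hκ.trans h2

theorem gamma_bound_general {V : Type*} [Fintype V] (G : SimpleGraph V)
    [DecidableRel G.Adj] (hconn : G.Connected)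
    (κ : ℝ) (hκ : 0 < κ)
    (hcurv : ∀ u v : V, G.Adj u v → κ ≤ kappaLLY G u v)
    (x y : V) (i : ℕ) (hi : 1 ≤ i) (hdist : G.dist x y = i) :
    ((((G.neighborFinset y).filter fun u => G.dist x u = G.dist x y + 1).card : ℝ)
      + (1 / 2) * (((G.neighborFinset y).filter fun u => G.dist x u = G.dist x y).card : ℝ))
      ≤ (1 - i * κ / 2) * G.degree y := by
  rw [hdist]
  set f : V → ℝ := fun u => (G.dist x u : ℝ) with hf_def
  have hlip : IsLip1 G f := by
    intro u v
    have t1 : G.dist x u ≤ G.dist x v + G.dist v u := hconn.dist_triangle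
    have t2 : G.dist x v ≤ G.dist x u + G.dist u v := hconn.dist_triangle
    have hc : G.dist v u = G.dist u v := SimpleGraph.dist_comm
    rw [hc] at t1
    rw [abs_sub_le_iff]
    constructor
    · simp only [hf_def]
      have : (G.dist x u : ℝ) ≤ (G.dist x v : ℝ) + (G.dist u v : ℝ) := by exact_mod_cast t1
      linarith
    · simp only [hf_def]
      have : (G.dist x v : ℝ) ≤ (G.dist x u : ℝ) + (G.dist u v : ℝ) := by exact_mod_cast t2
      linarith
  obtain ⟨p, hp⟩ := hconn.exists_walk_length_eq_dist x y
  rw [hdist] at hp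
  set z : ℕ → V := fun j => p.getVert j with hz
  have hadjz : ∀ j < i, G.Adj (z j) (z (j+1)) := by
    intro j hj
    exact p.adj_getVert_succ (by omega)
  have hz0 : z 0 = x := p.getVert_zero
  have hzi : z i = y := by
    have := p.getVert_length
    rwa [hp] at this
  have hup : ∀ j, j ≤ i → G.dist x (z j) ≤ j := by
    intro j
    induction j with
    | zero => intro _; rw [hz0]; simp
    | succ n ih =>
      intro h
      have h1 := ih (by omega)
      have t : G.dist x (z (n+1)) ≤ G.dist x (z n) + G.dist (z n) (z (n+1)) :=
        hconn.dist_triangle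
      have h2 : G.dist (z n) (z (n+1)) = 1 :=
        SimpleGraph.dist_eq_one_iff_adj.mpr (hadjz n (by omega))
      omega
  have hdown : ∀ k j, j + k = i → G.dist (z j) y ≤ k := by
    intro k
    induction k with
    | zero =>
      intro j hj
      have : z j = y := by rw [show j = i by omega]; exact hzi
      rw [this]; simp
    | succ n ih =>
      intro j hj
      have t : G.dist (z j) y ≤ G.dist (z j) (z (j+1)) + G.dist (z (j+1)) y :=
        hconn.dist_triangle
      have h1 : G.dist (z j) (z (j+1)) = 1 :=
        SimpleGraph.dist_eq_one_iff_adj.mpr (hadjz j (by omega))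
      have h2 := ih (j+1) (by omega)
      omega
  have hdz : ∀ j, j ≤ i → G.dist x (z j) = j := by
    intro j hj
    have h1 := hup j hj
    have h2 := hdown (i - j) j (by omega)
    have t : G.dist x y ≤ G.dist x (z j) + G.dist (z j) y := hconn.dist_triangle
    rw [hdist] at t
    omega
  have hstep : ∀ j < i, κ ≤ graphLap G f (z j) - graphLap G f (z (j+1)) := by
    intro j hj
    refine edge_step G (hadjz j hj) hlip ?_ (hcurv _ _ (hadjz j hj))
    show (G.dist x (z (j+1)) : ℝ) - (G.dist x (z j) : ℝ) = 1
    rw [hdz (j+1) (by omega), hdz j (by omega)]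
    push_cast; ring
  have htel : (i : ℝ) * κ ≤ graphLap G f x - graphLap G f y := by
    have h1 : ∑ j ∈ Finset.range i, κ ≤
        ∑ j ∈ Finset.range i, (graphLap G f (z j) - graphLap G f (z (j+1))) :=
      Finset.sum_le_sum fun j hj => hstep j (Finset.mem_range.mp hj)
    rw [Finset.sum_const, Finset.card_range, nsmul_eq_mul] at h1
    rw [Finset.sum_range_sub' (fun j => graphLap G f (z j))] at h1
    rwa [hz0, hzi] at h1
  have hlapx : graphLap G f x = 1 := by
    have hdegx : 0 < G.degree x := by
      rw [SimpleGraph.degree_pos_iff_exists_adj]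
      exact ⟨z 1, hz0 ▸ hadjz 0 (by omega)⟩
    unfold graphLap
    have hterm : ∀ u ∈ G.neighborFinset x, f u - f x = 1 := by
      intro u hu
      have hadj : G.Adj x u := by rwa [SimpleGraph.mem_neighborFinset] at hu
      simp only [hf_def]
      rw [SimpleGraph.dist_eq_one_iff_adj.mpr hadj]
      simp
    rw [Finset.sum_congr rfl hterm, Finset.sum_const, SimpleGraph.card_neighborFinset_eq_degree]
    have : (G.degree x : ℝ) ≠ 0 := by exact_mod_cast hdegx.ne'
    field_simp
    rw [nsmul_eq_mul, mul_one]
  -- partition neighbors of y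
  set S := G.neighborFinset y with hS
  set A := S.filter (fun u => G.dist x u = i + 1) with hA
  set B := S.filter (fun u => G.dist x u = i) with hB
  set C := (S.filter (fun u => ¬ G.dist x u = i + 1)).filter (fun u => ¬ G.dist x u = i) with hC
  have htri : ∀ u ∈ S, G.dist x u + 1 = i ∨ G.dist x u = i ∨ G.dist x u = i + 1 := by
    intro u hu
    have hadj : G.Adj y u := by rwa [hS, SimpleGraph.mem_neighborFinset] at hu
    have h1 : G.dist x u ≤ G.dist x y + G.dist y u := hconn.dist_triangle
    have h2 : G.dist x y ≤ G.dist x u + G.dist u y := hconn.dist_triangle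
    have h3 : G.dist y u = 1 := SimpleGraph.dist_eq_one_iff_adj.mpr hadj
    have h4 : G.dist u y = 1 := SimpleGraph.dist_eq_one_iff_adj.mpr hadj.symm
    rw [hdist] at h1 h2
    omega
  have hB' : (S.filter (fun u => ¬ G.dist x u = i + 1)).filter (fun u => G.dist x u = i) = B := by
    ext u
    simp only [hB, Finset.mem_filter]
    constructor
    · rintro ⟨⟨h1, _⟩, h3⟩; exact ⟨h1, h3⟩
    · rintro ⟨h1, h2⟩; exact ⟨⟨h1, by omega⟩, h2⟩
  have hcard : A.card + B.card + C.card = G.degree y := by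
    have e1 := Finset.card_filter_add_card_filter_not
      (s := S) (p := fun u => G.dist x u = i + 1)
    have e2 := Finset.card_filter_add_card_filter_not
      (s := S.filter (fun u => ¬ G.dist x u = i + 1)) (p := fun u => G.dist x u = i)
    rw [hB'] at e2
    have e3 : S.card = G.degree y := SimpleGraph.card_neighborFinset_eq_degree G y
    have e4 : (filter (fun a => ¬G.dist x a = i)
        (filter (fun u => ¬G.dist x u = i + 1) S)).card = C.card := by
      rw [hC]
    have e5 : (S.filter (fun u => G.dist x u = i + 1)).card = A.card := by rw [hA]
    have e6 : ((S.filter (fun u => ¬ G.dist x u = i + 1)).filter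
        (fun u => G.dist x u = i)).card = B.card := by rw [hB']
    omega
  have hfy : f y = (i : ℝ) := by simp only [hf_def]; rw [hdist]
  have hsum : ∑ u ∈ S, (f u - f y) = (A.card : ℝ) - (C.card : ℝ) := by
    rw [← Finset.sum_filter_add_sum_filter_not S (fun u => G.dist x u = i + 1)]
    rw [← Finset.sum_filter_add_sum_filter_not
      (S.filter (fun u => ¬ G.dist x u = i + 1)) (fun u => G.dist x u = i)]
    have sA : ∑ u ∈ A, (f u - f y) = (A.card : ℝ) := by
      rw [Finset.sum_congr rfl (g := fun _ => (1:ℝ)) ?_, Finset.sum_const, nsmul_eq_mul, mul_one]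
      intro u hu
      rw [hA, Finset.mem_filter] at hu
      simp only [hf_def]
      rw [hu.2, hdist]; push_cast; ring
    have sB : ∑ u ∈ (S.filter (fun u => ¬ G.dist x u = i + 1)).filter (fun u => G.dist x u = i),
        (f u - f y) = 0 := by
      rw [hB']
      apply Finset.sum_eq_zero
      intro u hu
      rw [hB, Finset.mem_filter] at hu
      simp only [hf_def]
      rw [hu.2, hdist]; ring
    have sC : ∑ u ∈ C, (f u - f y) = -(C.card : ℝ) := by
      rw [Finset.sum_congr rfl (g := fun _ => (-1:ℝ)) ?_, Finset.sum_const, nsmul_eq_mul,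
        mul_neg_one]
      intro u hu
      rw [hC, Finset.mem_filter, Finset.mem_filter] at hu
      have hu' : u ∈ S := hu.1.1
      have := htri u hu'
      have hd : G.dist x u + 1 = i := by
        rcases this with h | h | h
        · exact h
        · exact absurd h hu.2
        · exact absurd h hu.1.2
      simp only [hf_def]
      rw [hdist]
      have hcd : (G.dist x u : ℝ) + 1 = (i : ℝ) := by exact_mod_cast hd
      linarith
    rw [sA, sB, sC]
    ring
  have hdegy : 0 < G.degree y := by
    rw [SimpleGraph.degree_pos_iff_exists_adj]
    refine ⟨z (i - 1), ?_⟩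
    have := hadjz (i-1) (by omega)
    rw [show i - 1 + 1 = i by omega, hzi] at this
    exact this.symm
  have hD : (0:ℝ) < (G.degree y : ℝ) := by exact_mod_cast hdegy
  have hlapy : graphLap G f y = ((A.card : ℝ) - (C.card : ℝ)) / (G.degree y : ℝ) := by
    unfold graphLap
    rw [← hS, hsum]
    rw [inv_mul_eq_div]
  rw [hlapx, hlapy] at htel
  have hkey : (A.card : ℝ) - (C.card : ℝ) ≤ (1 - (i:ℝ) * κ) * (G.degree y : ℝ) := by
    have h5 : ((A.card : ℝ) - (C.card : ℝ)) / (G.degree y : ℝ) ≤ 1 - (i:ℝ) * κ := by linarith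
    rw [div_le_iff₀ hD] at h5
    linarith
  have hcard' : (A.card : ℝ) + (B.card : ℝ) + (C.card : ℝ) = (G.degree y : ℝ) := by
    exact_mod_cast hcard
  have hgoal : ((A.card : ℝ) + (1/2) * (B.card : ℝ)) ≤ (1 - (i:ℝ) * κ / 2) * (G.degree y : ℝ) := by
    nlinarith
  exact hgoal
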